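/- Let ℰ be a bundle event structure. If x and y are configurations of ℰ with x ⊆ y, then the lposet (x, ≼_x, λ|_x) is a prefix of the lposet (y, ≼_y, λ|_y). -/

import Mathlib

open Classical

namespace PCKA

/-- A bundle event structure over event universe `Ev` and alphabet `A`:
a set of events, a conflict relation, a bundle relation, a partial labelling
(modelled via `Option`) and a set of final events. -/
structure BES (Ev A : Type) where
  E : Set Ev
  conflict : Ev → Ev → Prop
  bundle : Set Ev → Ev → Prop
  lab : Ev → Option A
  final : Set Ev

variable {Ev A : Type}

/-- Well-formedness of a bundle event structure. -/
def IsBES (ℰ : BES Ev A) : Prop :=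
  (∀ e, ¬ ℰ.conflict e e) ∧
  (∀ e e', ℰ.conflict e e' → ℰ.conflict e' e) ∧
  (∀ e e', ℰ.conflict e e' → e ∈ ℰ.E ∧ e' ∈ ℰ.E) ∧
  (∀ x e, ℰ.bundle x e → e ∈ ℰ.E ∧ x ⊆ ℰ.E ∧
    ∀ a ∈ x, ∀ b ∈ x, a ≠ b → ℰ.conflict a b) ∧
  (∀ e, ℰ.lab e ≠ none → e ∈ ℰ.E) ∧
  ℰ.final ⊆ ℰ.E ∧
  (∀ a ∈ ℰ.final, ∀ b ∈ ℰ.final, a ≠ b → ℰ.conflict a b)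

/-- `α` is an event trace of `ℰ`: every event is enabled by each of its bundles
and is distinct from and conflict-free with all earlier events. -/
def IsTrace (ℰ : BES Ev A) (α : List Ev) : Prop :=
  ∀ l e r, α = l ++ e :: r →
    e ∈ ℰ.E ∧
    (∀ x, ℰ.bundle x e → ∃ e' ∈ l, e' ∈ x) ∧
    (∀ e' ∈ l, e ≠ e' ∧ ¬ ℰ.conflict e e')

/-- A configuration is the set of events of some event trace (a linearisation). -/
def IsConfig (ℰ : BES Ev A) (x : Set Ev) : Prop :=
  ∃ α : List Ev, IsTrace ℰ α ∧ {e | e ∈ α} = x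

/-- Adjacent occurrences in a list. -/
def traceAdj (α : List Ev) (a b : Ev) : Prop := ∃ l r, α = l ++ a :: b :: r

/-- The order `≼_α` induced by an event trace: reflexive transitive closure of
adjacency in the trace. -/
def traceOrder (α : List Ev) : Ev → Ev → Prop := Relation.ReflTransGen (traceAdj α)

/-- The causal order `≼_x` of a configuration: the intersection of the orders
of all its linearisations. -/
def configOrder (ℰ : BES Ev A) (x : Set Ev) (a b : Ev) : Prop :=
  ∀ α, IsTrace ℰ α → {e | e ∈ α} = x → traceOrder α a b

/-- The labelling restricted to a set of events. -/
noncomputable def labOn (ℰ : BES Ev A) (x : Set Ev) : Ev → Option A :=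
  fun e => if e ∈ x then ℰ.lab e else none

/-- `(x, o, l)` is the lposet of the configuration `x` of `ℰ`. -/
def IsLposetOf (ℰ : BES Ev A) (x : Set Ev) (o : Ev → Ev → Prop)
    (l : Ev → Option A) : Prop :=
  IsConfig ℰ x ∧
  (∀ a b, o a b ↔ (a ∈ x ∧ b ∈ x ∧ configOrder ℰ x a b)) ∧
  l = labOn ℰ x

/-- The lposet `(x,ox,lx)` is a prefix of the lposet `(y,oy,ly)`. -/
def LposetPrefix (x : Set Ev) (ox : Ev → Ev → Prop) (lx : Ev → Option A)
    (y : Set Ev) (oy : Ev → Ev → Prop) (ly : Ev → Option A) : Prop :=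
  x ⊆ y ∧
  (∀ e ∈ x, ly e = lx e) ∧
  (∀ e e', oy e e' → e' ∈ x → e ∈ x ∧ ox e e')

/-- Restriction of a list to the elements of a set (the subsequence `α|_x`). -/
noncomputable def listRestrict (α : List Ev) (x : Set Ev) : List Ev :=
  α.filter (fun e => decide (e ∈ x))

/-- The sub-BES order `ℰ ⊑ ℱ`. -/
def SubBES (ℰ ℱ : BES Ev A) : Prop :=
  ℰ.E ⊆ ℱ.E ∧
  (∀ e e', ℰ.conflict e e' ↔ (ℱ.conflict e e' ∧ e ∈ ℰ.E ∧ e' ∈ ℰ.E)) ∧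
  (∀ x e, ℰ.bundle x e → ℱ.bundle x e) ∧
  (∀ x e, ℱ.bundle x e → e ∈ ℰ.E → x ⊆ ℰ.E ∧ ℰ.bundle x e) ∧
  (∀ e ∈ ℰ.E, ℰ.lab e = ℱ.lab e) ∧
  (∀ e, e ∈ ℰ.final ↔ (e ∈ ℱ.final ∧ e ∈ ℰ.E))

/-- `ℰ` is the componentwise union of the chain `c`. -/
def IsChainUnion (c : ℕ → BES Ev A) (ℰ : BES Ev A) : Prop :=
  ℰ.E = (⋃ i, (c i).E) ∧
  (∀ e e', ℰ.conflict e e' ↔ ∃ i, (c i).conflict e e') ∧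
  (∀ x e, ℰ.bundle x e ↔ ∃ i, (c i).bundle x e) ∧
  (∀ i, ∀ e ∈ (c i).E, ℰ.lab e = (c i).lab e) ∧
  (∀ e, e ∉ (⋃ i, (c i).E) → ℰ.lab e = none) ∧
  ℰ.final = (⋃ i, (c i).final)

/-- Immediate conflict. -/
def ImmConflict (ℰ : BES Ev A) (e e' : Ev) : Prop :=
  ℰ.conflict e e' ∧
  ∃ x, IsConfig ℰ x ∧ IsConfig ℰ (x ∪ {e}) ∧ IsConfig ℰ (x ∪ {e'})

/-- A partial cluster: pairwise immediately conflicting, equally pointed events. -/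
def PartialCluster (ℰ : BES Ev A) (K : Set Ev) : Prop :=
  K ⊆ ℰ.E ∧
  (∀ e ∈ K, ∀ e' ∈ K, e ≠ e' → ImmConflict ℰ e e') ∧
  (∀ e ∈ K, ∀ e' ∈ K, ∀ x, ℰ.bundle x e → ℰ.bundle x e')

/-- A cluster is a maximal partial cluster. -/
def Cluster (ℰ : BES Ev A) (K : Set Ev) : Prop :=
  PartialCluster ℰ K ∧ ∀ H, PartialCluster ℰ H → K ⊆ H → H = K

/-- `⟨e⟩`: the intersection of all clusters containing `e`. -/
def cell (ℰ : BES Ev A) (e : Ev) : Set Ev :=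
  ⋂₀ {K | Cluster ℰ K ∧ e ∈ K}

/-- `cfl x`: events in conflict with some event of `x`. -/
def cfl (ℰ : BES Ev A) (x : Set Ev) : Set Ev :=
  {e | e ∈ ℰ.E ∧ ∃ e' ∈ x, ℰ.conflict e e'}

/-- Confusion freeness. -/
def ConfusionFree (ℰ : BES Ev A) : Prop :=
  (∀ e e', ImmConflict ℰ e e' → e ∈ cell ℰ e') ∧
  (∀ x e, IsConfig ℰ x → cell ℰ e ∩ x = ∅ → IsConfig ℰ (x ∪ {e}) →
    ∀ e'' ∈ cell ℰ e, IsConfig ℰ (x ∪ {e''}))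

/-- Initial events: those pointed by no bundle. -/
def bInit (ℰ : BES Ev A) : Set Ev :=
  {e | e ∈ ℰ.E ∧ ∀ x, ¬ ℰ.bundle x e}

/-- Nondeterministic choice `ℰ + ℱ` (for disjoint BES). -/
def bchoice (ℰ ℱ : BES Ev A) : BES Ev A where
  E := ℰ.E ∪ ℱ.E
  conflict := fun e e' => ℰ.conflict e e' ∨ ℱ.conflict e e' ∨
    (e ∈ bInit ℰ ∧ e' ∈ bInit ℱ) ∨ (e ∈ bInit ℱ ∧ e' ∈ bInit ℰ) ∨
    (e ∈ ℰ.final ∧ e' ∈ ℱ.final) ∨ (e ∈ ℱ.final ∧ e' ∈ ℰ.final)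
  bundle := fun x e => ℰ.bundle x e ∨ ℱ.bundle x e
  lab := fun e => (ℰ.lab e).orElse (fun _ => ℱ.lab e)
  final := ℰ.final ∪ ℱ.final

/-- Sequential composition `ℰ · ℱ` (for disjoint BES). -/
def bseq (ℰ ℱ : BES Ev A) : BES Ev A where
  E := ℰ.E ∪ ℱ.E
  conflict := fun e e' => ℰ.conflict e e' ∨ ℱ.conflict e e'
  bundle := fun x e => ℰ.bundle x e ∨ ℱ.bundle x e ∨ (x = ℰ.final ∧ e ∈ bInit ℱ)
  lab := fun e => (ℰ.lab e).orElse (fun _ => ℱ.lab e)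
  final := ℱ.final

/-- Concurrent composition `ℰ ‖ ℱ` with fresh delimiter events `d₁, d₂`. -/
def bpar (ℰ ℱ : BES Ev A) (d₁ d₂ : Ev) : BES Ev A where
  E := ℰ.E ∪ ℱ.E ∪ {d₁, d₂}
  conflict := fun e e' => ℰ.conflict e e' ∨ ℱ.conflict e e'
  bundle := fun x e => ℰ.bundle x e ∨ ℱ.bundle x e ∨
    (x = {d₁} ∧ (e ∈ bInit ℰ ∨ e ∈ bInit ℱ)) ∨
    (x = ℰ.final ∧ e = d₂) ∨ (x = ℱ.final ∧ e = d₂)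
  lab := fun e => (ℰ.lab e).orElse (fun _ => ℱ.lab e)
  final := {d₂}

/-- Renaming of a BES along a map of events. -/
noncomputable def brename (g : Ev → Ev) (ℰ : BES Ev A) : BES Ev A where
  E := g '' ℰ.E
  conflict := fun e e' => ∃ a b, ℰ.conflict a b ∧ e = g a ∧ e' = g b
  bundle := fun x e => ∃ y a, ℰ.bundle y a ∧ x = g '' y ∧ e = g a
  lab := fun e => if h : ∃ a, a ∈ ℰ.E ∧ g a = e then ℰ.lab h.choose else none
  final := g '' ℰ.final

/-- `ℰ'` is a (fresh) copy of `ℰ`. -/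
def IsCopy (ℰ' ℰ : BES Ev A) : Prop :=
  ∃ g : Ev → Ev, Set.InjOn g ℰ.E ∧ ℰ' = brename g ℰ

/-- `𝒮` is the binary Kleene product `ℰ * ℱ`: the componentwise union of the
chain `ℱ ⊑ ℱ + ℰ·ℱ ⊑ ⋯` built with fresh disjoint copies at each stage. -/
def IsStarOf (ℰ ℱ 𝒮 : BES Ev A) : Prop :=
  ∃ c : ℕ → BES Ev A,
    IsCopy (c 0) ℱ ∧
    (∀ i, ∃ ℰ' ℱ' : BES Ev A, IsCopy ℰ' ℰ ∧ IsCopy ℱ' ℱ ∧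
      ℱ'.E ∩ (ℰ'.E ∪ (c i).E) = ∅ ∧ ℰ'.E ∩ (c i).E = ∅ ∧
      c (i + 1) = bchoice ℱ' (bseq ℰ' (c i)) ∧
      SubBES (c i) (c (i + 1))) ∧
    IsChainUnion c 𝒮

/-- The basic BES `0` (deadlock). -/
def besZero : BES Ev A :=
  ⟨∅, fun _ _ => False, fun _ _ => False, fun _ => none, ∅⟩

/-- The basic BES `1` (skip), with a single unlabelled final event. -/
def besOne (e : Ev) : BES Ev A :=
  ⟨{e}, fun _ _ => False, fun _ _ => False, fun _ => none, {e}⟩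

/-- The basic BES for a one-step action `a`. -/
noncomputable def besAct (e : Ev) (a : A) : BES Ev A :=
  ⟨{e}, fun _ _ => False, fun _ _ => False,
    fun e' => if e' = e then some a else none, {e}⟩

/-- Regular BES: built from the basic BES by `+`, `·`, `‖` and `*`. -/
inductive Regular : BES Ev A → Prop
  | zero : Regular besZero
  | one (e : Ev) : Regular (besOne e)
  | act (e : Ev) (a : A) : Regular (besAct e a)
  | choice {ℰ ℱ : BES Ev A} : Regular ℰ → Regular ℱ → ℰ.E ∩ ℱ.E = ∅ →
      Regular (bchoice ℰ ℱ)
  | seq {ℰ ℱ : BES Ev A} : Regular ℰ → Regular ℱ → ℰ.E ∩ ℱ.E = ∅ →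
      Regular (bseq ℰ ℱ)
  | par {ℰ ℱ : BES Ev A} (d₁ d₂ : Ev) : Regular ℰ → Regular ℱ →
      ℰ.E ∩ ℱ.E = ∅ → d₁ ≠ d₂ → d₁ ∉ ℰ.E ∪ ℱ.E → d₂ ∉ ℰ.E ∪ ℱ.E →
      Regular (bpar ℰ ℱ d₁ d₂)
  | star {ℰ ℱ 𝒮 : BES Ev A} : Regular ℰ → Regular ℱ → IsStarOf ℰ ℱ 𝒮 →
      Regular 𝒮

/-- A probability distribution on a BES: a discrete distribution on events
whose support is contained in a single cell `⟨e⟩`. -/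
def IsDistOn (ℰ : BES Ev A) (p : PMF Ev) : Prop :=
  ∃ e ∈ ℰ.E, p.support ⊆ cell ℰ e

/-- A probabilistic bundle event structure: a BES with a set of distributions. -/
structure PBES (Ev A : Type) where
  bes : BES Ev A
  dists : Set (PMF Ev)

/-- Well-formedness of a probabilistic BES. -/
def IsPBES (P : PBES Ev A) : Prop :=
  IsBES P.bes ∧ ConfusionFree P.bes ∧
  (∀ p ∈ P.dists, IsDistOn P.bes p) ∧
  (∀ e ∈ P.bes.E, ∃ p ∈ P.dists, e ∈ p.support)

/-- No bundle set contains a final event. -/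
def NoFinalBundle (ℰ : BES Ev A) : Prop :=
  ∀ x e, ℰ.bundle x e → x ∩ ℰ.final = ∅

/-- Probabilistic prefix: `x ⊑ Δ` iff `Δ = Σ_{e ∈ supp p} p e · δ_{x ∪ {e}}`
for some `p` in the distribution set, with `supp p` disjoint from `x` and all
extensions configurations. -/
def ProbPrefix (P : PBES Ev A) (x : Set Ev) (Δ : PMF (Set Ev)) : Prop :=
  IsConfig P.bes x ∧
  ∃ p ∈ P.dists, p.support ∩ x = ∅ ∧
    (∀ e ∈ p.support, IsConfig P.bes (x ∪ {e})) ∧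
    Δ = p.bind (fun e => PMF.pure (x ∪ {e}))

/-- Lifting of a relation `S ⊆ X × 𝒟(Y)` to `𝒟(X) × 𝒟(Y)`. -/
def Lift {X Y : Type} (S : X → PMF Y → Prop) (Δ : PMF X) (Θ : PMF Y) : Prop :=
  ∃ (ι : Type) (_ : Countable ι) (w : PMF ι) (xs : ι → X) (Θs : ι → PMF Y),
    Δ = w.bind (fun i => PMF.pure (xs i)) ∧
    (∀ i, w i ≠ 0 → S (xs i) (Θs i)) ∧
    Θ = w.bind Θs

/-- The labelled events of a configuration. -/
def hatSet (ℰ : BES Ev A) (x : Set Ev) : Set Ev :=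
  {e | e ∈ x ∧ ℰ.lab e ≠ none}

/-- Implementation (subsumption) `x ⊑_s y` between configurations: a
label-preserving monotonic bijection from the labelled events of `y` to those
of `x`. -/
def Subsum (ℰ : BES Ev A) (x : Set Ev) (ℱ : BES Ev A) (y : Set Ev) : Prop :=
  ∃ f : Ev → Ev, Set.BijOn f (hatSet ℱ y) (hatSet ℰ x) ∧
    (∀ e ∈ hatSet ℱ y, ℰ.lab (f e) = ℱ.lab e) ∧
    (∀ e e', e ∈ hatSet ℱ y → e' ∈ hatSet ℱ y →
      configOrder ℱ y e e' → configOrder ℰ x (f e) (f e'))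

/-- Probabilistic simulation from `P` to `Q`. -/
def IsSimulation (P Q : PBES Ev A) (S : Set Ev → PMF (Set Ev) → Prop) : Prop :=
  S ∅ (PMF.pure ∅) ∧
  (∀ x Θ, S x Θ → IsConfig P.bes x ∧
    ∀ y ∈ Θ.support, IsConfig Q.bes y ∧ Subsum P.bes x Q.bes y) ∧
  (∀ x Θ Δ', S x Θ → ProbPrefix P x Δ' →
    ∃ Θ', Relation.ReflTransGen (Lift (ProbPrefix Q)) Θ Θ' ∧ Lift S Δ' Θ') ∧
  (∀ x Θ, S x Θ → (x ∩ P.bes.final).Nonempty →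
    ∀ y ∈ Θ.support, (y ∩ Q.bes.final).Nonempty)

/-- `P ⊑ Q`: there exists a probabilistic simulation from `P` to `Q`. -/
def Sim (P Q : PBES Ev A) : Prop := ∃ S, IsSimulation P Q S

/-- Nondeterministic choice of pBES. -/
def pch (P Q : PBES Ev A) : PBES Ev A :=
  ⟨bchoice P.bes Q.bes, P.dists ∪ Q.dists⟩

/-- Sequential composition of pBES. -/
def pseq (P Q : PBES Ev A) : PBES Ev A :=
  ⟨bseq P.bes Q.bes, P.dists ∪ Q.dists⟩

/-- Concurrent composition of pBES with fresh delimiters `d₁, d₂`. -/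
noncomputable def ppar (P Q : PBES Ev A) (d₁ d₂ : Ev) : PBES Ev A :=
  ⟨bpar P.bes Q.bes d₁ d₂, P.dists ∪ Q.dists ∪ {PMF.pure d₁, PMF.pure d₂}⟩

/-- The sub-pBES order. -/
def SubPBES (P Q : PBES Ev A) : Prop :=
  SubBES P.bes Q.bes ∧ P.dists = {p | p ∈ Q.dists ∧ p.support ⊆ P.bes.E}

/-- Renaming of a pBES. -/
noncomputable def prename (g : Ev → Ev) (P : PBES Ev A) : PBES Ev A :=
  ⟨brename g P.bes, (fun p => p.map g) '' P.dists⟩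

/-- `P'` is a (fresh) copy of the pBES `P`. -/
def IsPCopy (P' P : PBES Ev A) : Prop :=
  ∃ g : Ev → Ev, Set.InjOn g P.bes.E ∧ P' = prename g P

/-- Componentwise union of a chain of pBES. -/
def IsPChainUnion (c : ℕ → PBES Ev A) (P : PBES Ev A) : Prop :=
  IsChainUnion (fun i => (c i).bes) P.bes ∧ P.dists = ⋃ i, (c i).dists

/-- `S` is the binary Kleene product `P * G` of pBES. -/
def IsPStarOf (P G S : PBES Ev A) : Prop :=
  ∃ c : ℕ → PBES Ev A,
    IsPCopy (c 0) G ∧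
    (∀ i, ∃ P' G' : PBES Ev A, IsPCopy P' P ∧ IsPCopy G' G ∧
      G'.bes.E ∩ (P'.bes.E ∪ (c i).bes.E) = ∅ ∧ P'.bes.E ∩ (c i).bes.E = ∅ ∧
      c (i + 1) = pch G' (pseq P' (c i)) ∧
      SubPBES (c i) (c (i + 1))) ∧
    IsPChainUnion c S


section AuxProof

variable {Ev A : Type}

private lemma traceAdj_of_getElem {α : List Ev} {a b : Ev} {i : ℕ}
    (ha : α[i]? = some a) (hb : α[i+1]? = some b) : traceAdj α a b := by
  obtain ⟨hi1, hb'⟩ := List.getElem?_eq_some_iff.mp hb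
  have hi : i < α.length := by omega
  have ha' : α[i] = a := by
    obtain ⟨_, h⟩ := List.getElem?_eq_some_iff.mp ha; exact h
  refine ⟨α.take i, α.drop (i+2), ?_⟩
  have h1 := List.drop_eq_getElem_cons hi
  have h2 := List.drop_eq_getElem_cons hi1
  rw [ha'] at h1; rw [hb'] at h2
  have := List.take_append_drop i α
  rw [h1, h2] at this
  exact this.symm

private lemma traceOrder_of_indices {α : List Ev} :
    ∀ {j i : ℕ} {a b : Ev}, i ≤ j → α[i]? = some a → α[j]? = some b →
      traceOrder α a b := by
  intro j
  induction j with
  | zero =>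
    intro i a b hij ha hb
    have : i = 0 := by omega
    subst this
    rw [ha] at hb
    cases hb
    exact Relation.ReflTransGen.refl
  | succ j ih =>
    intro i a b hij ha hb
    rcases Nat.lt_or_ge i (j+1) with hlt | hge
    · have hi : i ≤ j := by omega
      have hjlen : j + 1 < α.length := (List.getElem?_eq_some_iff.mp hb).1
      have hjlt : j < α.length := by omega
      have hc : α[j]? = some α[j] := List.getElem?_eq_getElem hjlt
      exact Relation.ReflTransGen.tail (ih hi ha hc) (traceAdj_of_getElem hc hb)
    · have : i = j + 1 := by omega
      subst this
      rw [ha] at hb; cases hb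
      exact Relation.ReflTransGen.refl

private lemma indices_of_traceOrder {α : List Ev} (hnd : α.Nodup) {a b : Ev}
    (h : traceOrder α a b) :
    a = b ∨ ∃ i j : ℕ, i ≤ j ∧ α[i]? = some a ∧ α[j]? = some b := by
  induction h with
  | refl => exact Or.inl rfl
  | @tail c d hchain hadj ih =>
    obtain ⟨l, r, hlr⟩ := hadj
    have hc : α[l.length]? = some c := by
      rw [hlr, List.getElem?_append_right le_rfl]
      simp
    have hd : α[l.length + 1]? = some d := by
      rw [hlr, List.getElem?_append_right (by omega)]
      have : l.length + 1 - l.length = 1 := by omega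
      rw [this]
      simp
    rcases ih with rfl | ⟨i, j, hij, ha, hcj⟩
    · exact Or.inr ⟨l.length, l.length + 1, by omega, hc, hd⟩
    · have hjlen : j < α.length := (List.getElem?_eq_some_iff.mp hcj).1
      have : j = l.length := (List.getElem?_inj hjlen hnd).mp (hcj.trans hc.symm)
      exact Or.inr ⟨i, l.length + 1, by omega, ha, hd⟩

private lemma trace_nodup {ℰ : BES Ev A} {α : List Ev} (h : IsTrace ℰ α) :
    α.Nodup := by
  rw [List.nodup_iff_getElem?_ne_getElem?]
  intro i j hij hjlen heq
  have hsplit : α = α.take j ++ α[j] :: α.drop (j+1) := by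
    conv_lhs => rw [← List.take_append_drop j α]
    rw [List.drop_eq_getElem_cons hjlen]
  have hmem : α[i] ∈ α.take j := by
    rw [List.mem_iff_getElem?]
    refine ⟨i, ?_⟩
    rw [List.getElem?_take, if_pos hij]
    exact List.getElem?_eq_getElem (by omega)
  have := ((h _ _ _ hsplit).2.2 _ hmem).1
  rw [List.getElem?_eq_getElem (by omega : i < α.length),
      List.getElem?_eq_getElem hjlen] at heq
  exact this (by injection heq with h'; exact h'.symm)

private lemma trace_mem_E {ℰ : BES Ev A} {α : List Ev} (h : IsTrace ℰ α)
    {e : Ev} (he : e ∈ α) : e ∈ ℰ.E := by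
  obtain ⟨s, t, hst⟩ := List.append_of_mem he
  exact (h _ _ _ hst).1

private lemma trace_not_conflict_aux {ℰ : BES Ev A} {α : List Ev}
    (h : IsTrace ℰ α) {i j : ℕ} (hij : i < j) (hjlen : j < α.length) :
    ¬ ℰ.conflict α[j] α[i] := by
  have hsplit : α = α.take j ++ α[j] :: α.drop (j+1) := by
    conv_lhs => rw [← List.take_append_drop j α]
    rw [List.drop_eq_getElem_cons hjlen]
  have hmem : α[i] ∈ α.take j := by
    rw [List.mem_iff_getElem?]
    refine ⟨i, ?_⟩
    rw [List.getElem?_take, if_pos hij]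
    exact List.getElem?_eq_getElem (by omega)
  exact ((h _ _ _ hsplit).2.2 _ hmem).2

private lemma trace_not_conflict {ℰ : BES Ev A} (hwf : IsBES ℰ)
    {α : List Ev} (h : IsTrace ℰ α) {a b : Ev} (ha : a ∈ α) (hb : b ∈ α)
    (hab : a ≠ b) : ¬ ℰ.conflict a b := by
  obtain ⟨i, hi⟩ := List.mem_iff_getElem?.mp ha
  obtain ⟨j, hj⟩ := List.mem_iff_getElem?.mp hb
  obtain ⟨hilen, hi'⟩ := List.getElem?_eq_some_iff.mp hi
  obtain ⟨hjlen, hj'⟩ := List.getElem?_eq_some_iff.mp hj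
  rcases Nat.lt_trichotomy i j with hlt | heq | hgt
  · intro hc
    have := trace_not_conflict_aux h hlt hjlen
    rw [hi', hj'] at this
    exact this (hwf.2.1 _ _ hc)
  · subst heq; rw [hi'] at hj'; exact absurd hj' hab
  · have := trace_not_conflict_aux h hgt hilen
    rw [hi', hj'] at this
    exact this

private lemma eq_of_append_cons {l₁ l₂ r₁ r₂ : List Ev} {e : Ev}
    (h : l₁ ++ e :: r₁ = l₂ ++ e :: r₂) (h1 : e ∉ l₁) (h2 : e ∉ l₂) :
    l₁ = l₂ := by
  rcases List.append_eq_append_iff.mp h with ⟨a', ha1, ha2⟩ | ⟨c', hc1, hc2⟩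
  · cases a' with
    | nil => simpa using ha1.symm
    | cons hd tl =>
      exfalso
      have : e = hd := by simpa using congrArg (·.head?) ha2
      subst this
      exact h2 (by rw [ha1]; simp)
  · cases c' with
    | nil => simpa using hc1
    | cons hd tl =>
      exfalso
      have : e = hd := by simpa using congrArg (·.head?) hc2
      subst this
      exact h1 (by rw [hc1]; simp)

private lemma trace_extend {ℰ : BES Ev A} (hwf : IsBES ℰ) {β α : List Ev}
    {x : Set Ev} (hβ : IsTrace ℰ β) (hsβ : {e | e ∈ β} = x)
    (hα : IsTrace ℰ α) (hβα : ∀ e ∈ β, e ∈ α) :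
    IsTrace ℰ (β ++ α.filter (fun e => decide (e ∉ x))) := by
  set δ := α.filter (fun e => decide (e ∉ x)) with hδ
  have hδsub : ∀ e ∈ δ, e ∈ α ∧ e ∉ x := by
    intro e he
    have := List.mem_filter.mp he
    exact ⟨this.1, by simpa using this.2⟩
  have hndα : α.Nodup := trace_nodup hα
  have hndδ : δ.Nodup := (List.filter_sublist (l := α)).nodup hndα
  have hxmem : ∀ e, e ∈ x ↔ e ∈ β := by
    intro e; rw [← hsβ]; rfl
  intro l e r heq
  -- main case analysis helper for when e lands in δ
  have hdelta : ∀ a' r', l = β ++ a' → δ = a' ++ e :: r' →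
      e ∈ ℰ.E ∧ (∀ x', ℰ.bundle x' e → ∃ e' ∈ l, e' ∈ x') ∧
      (∀ e' ∈ l, e ≠ e' ∧ ¬ ℰ.conflict e e') := by
    intro a' r' hl hδeq
    have hemem : e ∈ δ := by rw [hδeq]; simp
    obtain ⟨heα, hex⟩ := hδsub e hemem
    have henl : e ∉ a' := by
      intro hmem
      exact (List.disjoint_of_nodup_append (hδeq ▸ hndδ)) hmem (by simp)
    obtain ⟨l₂, r₂, hαsplit⟩ := List.append_of_mem heα
    have hαtrace := hα _ _ _ hαsplit
    have hfilter : δ = (l₂.filter (fun e => decide (e ∉ x))) ++ e ::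
        (r₂.filter (fun e => decide (e ∉ x))) := by
      rw [hδ, hαsplit, List.filter_append]
      congr 1
      rw [List.filter_cons, if_pos (by simpa using hex)]
    have henl₂ : e ∉ l₂.filter (fun e => decide (e ∉ x)) := by
      intro hmem
      exact (List.disjoint_of_nodup_append (hfilter ▸ hndδ)) hmem (by simp)
    have ha'eq : a' = l₂.filter (fun e => decide (e ∉ x)) :=
      eq_of_append_cons (hδeq.symm.trans hfilter) henl henl₂
    refine ⟨hαtrace.1, ?_, ?_⟩
    · intro x' hbund
      obtain ⟨e', he'l₂, he'x'⟩ := hαtrace.2.1 x' hbund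
      by_cases he'x : e' ∈ x
      · exact ⟨e', by rw [hl]; exact List.mem_append_left _ ((hxmem e').mp he'x),
          he'x'⟩
      · refine ⟨e', ?_, he'x'⟩
        rw [hl]
        refine List.mem_append_right _ ?_
        rw [ha'eq, List.mem_filter]
        exact ⟨he'l₂, by simpa using he'x⟩
    · intro e'' he''l
      rw [hl] at he''l
      rcases List.mem_append.mp he''l with hin | hin
      · have he''x : e'' ∈ x := (hxmem e'').mpr hin
        have hne : e ≠ e'' := fun h => hex (h ▸ he''x)
        exact ⟨hne, trace_not_conflict hwf hα heα (hβα _ hin) hne⟩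
      · have he''δ : e'' ∈ δ := by rw [hδeq]; exact List.mem_append_left _ hin
        have hne : e ≠ e'' := fun h => henl (h ▸ hin)
        exact ⟨hne, trace_not_conflict hwf hα heα (hδsub _ he''δ).1 hne⟩
  rcases List.append_eq_append_iff.mp heq with ⟨a', hl, hδeq⟩ | ⟨c', hβeq, hcons⟩
  · exact hdelta a' r hl hδeq
  · cases c' with
    | nil =>
      have hl : l = β ++ [] := by simpa using hβeq.symm
      have hδeq : δ = [] ++ e :: r := by simpa using hcons.symm
      exact hdelta [] r hl hδeq
    | cons hd tl =>
      have hhd : e = hd := by simpa using congrArg (·.head?) hcons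
      subst hhd
      exact hβ _ _ _ hβeq

end AuxProof

/-- Proposition 1: if `x ⊆ y` are configurations of a BES `ℰ`, then the lposet
of `x` is a prefix of the lposet of `y`. -/
theorem configuration_prefix {Ev A : Type} (ℰ : BES Ev A) (hwf : IsBES ℰ)
    (x y : Set Ev) (hx : IsConfig ℰ x) (hy : IsConfig ℰ y) (hxy : x ⊆ y) :
    LposetPrefix x (fun a b => a ∈ x ∧ b ∈ x ∧ configOrder ℰ x a b) (labOn ℰ x)
      y (fun a b => a ∈ y ∧ b ∈ y ∧ configOrder ℰ y a b) (labOn ℰ y) := by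
  obtain ⟨α, hα, hsα⟩ := hy
  have hkey : ∀ a b, b ∈ x → configOrder ℰ y a b →
      ∀ β, IsTrace ℰ β → {e | e ∈ β} = x → a ∈ x ∧ traceOrder β a b := by
    intro a b hb hord β hβ hsβ
    by_cases hab : a = b
    · subst hab; exact ⟨hb, Relation.ReflTransGen.refl⟩
    · have hβα : ∀ e ∈ β, e ∈ α := by
        intro e he
        have hex : e ∈ x := by rw [← hsβ] at *; exact he
        have := hxy hex
        rw [← hsα] at this; exact this
      set δ := α.filter (fun e => decide (e ∉ x)) with hδ
      have hγt : IsTrace ℰ (β ++ δ) := trace_extend hwf hβ hsβ hα hβα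
      have hγs : {e | e ∈ β ++ δ} = y := by
        ext e
        simp only [Set.mem_setOf_eq, List.mem_append, hδ, List.mem_filter,
          decide_eq_true_eq]
        constructor
        · rintro (h | ⟨h, _⟩)
          · exact hxy (by rw [← hsβ]; exact h)
          · rw [← hsα]; exact h
        · intro hey
          by_cases hex : e ∈ x
          · left; rw [← hsβ] at hex; exact hex
          · right; exact ⟨by rw [← hsα] at hey; exact hey, hex⟩
      have h := hord _ hγt hγs
      have hnd := trace_nodup hγt
      rcases indices_of_traceOrder hnd h with heq | ⟨i, j, hij, ha, hbj⟩
      · exact absurd heq hab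
      · have hjlt : j < β.length := by
          by_contra hge
          push_neg at hge
          have hbd : δ[j - β.length]? = some b := by
            rw [← List.getElem?_append_right hge]; exact hbj
          have : b ∈ δ := List.mem_iff_getElem?.mpr ⟨_, hbd⟩
          have := List.mem_filter.mp this
          simp only [decide_eq_true_eq] at this
          exact this.2 hb
        have ha' : β[i]? = some a := by
          rw [← List.getElem?_append_left (l₂ := δ) (by omega)]; exact ha
        have hb' : β[j]? = some b := by
          rw [← List.getElem?_append_left (l₂ := δ) hjlt]; exact hbj
        have hax : a ∈ x := by
          rw [← hsβ]; exact List.mem_iff_getElem?.mpr ⟨_, ha'⟩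
        exact ⟨hax, traceOrder_of_indices hij ha' hb'⟩
  obtain ⟨β₀, hβ₀, hsβ₀⟩ := hx
  refine ⟨hxy, ?_, ?_⟩
  · intro e he
    unfold labOn
    rw [if_pos (hxy he), if_pos he]
  · rintro e e' ⟨hey, he'y, hord⟩ he'x
    have hax : e ∈ x := (hkey e e' he'x hord β₀ hβ₀ hsβ₀).1
    exact ⟨hax, hax, he'x, fun β hβt hβs => (hkey e e' he'x hord β hβt hβs).2⟩

end PCKA
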